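/- Let f : P(X) × Y → ℝ be defined by f(Q, y) = max_{λ ∈ Λ} E_Q[l(y, λ, x)] with l continuous and Y, Λ, X compact. If y_i → y* in Y and Q_i → Q∞ weakly in P(X), then f(Q_i, y_i) → f(Q∞, y*). In particular, for a stationary ergodic process with conditional distributions P_i = P(X_0 ∈ · | X_{1−i}^{−1}) → P∞ weakly (by Lévy's zero-one law) and expert outputs y^i → y*, the Cesàro averages (1/N) Σ_{i=1}^N f(P_i, y^i) converge almost surely to E[f(P∞, y*)]. -/

import Mathlib

open MeasureTheory Filter Topology


-- limsup perturbation lemma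
lemma limsup_le_of_sub {u v : ℕ → ℝ} {C : ℝ} (hu : ∀ n, |u n| ≤ C) (hv : ∀ n, |v n| ≤ C)
    (h : Tendsto (fun n => v n - u n) atTop (𝓝 0)) :
    limsup v atTop ≤ limsup u atTop := by
  refine le_of_forall_pos_le_add (fun ε hε => ?_)
  have hbu : IsBoundedUnder (· ≤ ·) atTop u := isBoundedUnder_of ⟨C, fun n => (abs_le.1 (hu n)).2⟩
  have hcv : IsCoboundedUnder (· ≤ ·) atTop v :=
    (isBoundedUnder_of ⟨-C, fun n => (abs_le.1 (hv n)).1⟩ : IsBoundedUnder (· ≥ ·) atTop v).isCoboundedUnder_le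
  have h1 : ∀ᶠ n in atTop, u n < limsup u atTop + ε/2 :=
    eventually_lt_of_limsup_lt (by linarith) hbu
  have h2 : ∀ᶠ n in atTop, v n - u n < ε/2 := h.eventually_lt_const (by linarith)
  refine limsup_le_of_le hcv ?_
  filter_upwards [h1, h2] with n hn1 hn2
  linarith

lemma limsup_eq_of_sub {u v : ℕ → ℝ} {C : ℝ} (hu : ∀ n, |u n| ≤ C) (hv : ∀ n, |v n| ≤ C)
    (h : Tendsto (fun n => v n - u n) atTop (𝓝 0)) :
    limsup v atTop = limsup u atTop :=
  le_antisymm (limsup_le_of_sub hu hv h)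
    (limsup_le_of_sub hv hu (by simpa using (h.neg.congr (by intro n; ring_nf))))

section Birkhoff
variable {Ω : Type*} [MeasurableSpace Ω] {T : Ω → Ω} {g : Ω → ℝ} {C : ℝ}
set_option linter.unusedSectionVars false

/-- Birkhoff sums. -/
noncomputable def birkS (T : Ω → Ω) (g : Ω → ℝ) (n : ℕ) (ω : Ω) : ℝ :=
  ∑ k ∈ Finset.range n, g (T^[k] ω)

/-- Running maxima `max (0, S₁, …, Sₙ)`. -/
noncomputable def birkM (T : Ω → Ω) (g : Ω → ℝ) : ℕ → Ω → ℝ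
  | 0 => fun _ => 0
  | n + 1 => fun ω => max (birkM T g n ω) (birkS T g (n + 1) ω)

lemma birkS_succ' (n : ℕ) (ω : Ω) : birkS T g (n + 1) ω = g ω + birkS T g n (T ω) := by
  simp only [birkS, Finset.sum_range_succ']
  simp [Function.iterate_succ_apply, add_comm]

lemma birkS_abs_le (hC : ∀ ω, |g ω| ≤ C) (n : ℕ) (ω : Ω) : |birkS T g n ω| ≤ n * C := by
  calc |birkS T g n ω| ≤ ∑ k ∈ Finset.range n, |g (T^[k] ω)| := Finset.abs_sum_le_sum_abs _ _
    _ ≤ ∑ _k ∈ Finset.range n, C := Finset.sum_le_sum fun k _ => hC _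
    _ = n * C := by simp [mul_comm]

lemma birkM_nonneg (n : ℕ) (ω : Ω) : 0 ≤ birkM T g n ω := by
  induction n with
  | zero => simp [birkM]
  | succ n ih => exact le_trans ih (le_max_left _ _)

lemma birkM_mono (n : ℕ) (ω : Ω) : birkM T g n ω ≤ birkM T g (n + 1) ω := le_max_left _ _

lemma birkM_mono' {m n : ℕ} (h : m ≤ n) (ω : Ω) : birkM T g m ω ≤ birkM T g n ω := by
  induction n with
  | zero => simp_all
  | succ n ih =>
    rcases Nat.lt_or_ge m (n+1) with h'|h'
    · exact (ih (Nat.lt_succ_iff.1 h')).trans (birkM_mono n ω)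
    · have : m = n + 1 := le_antisymm h h'
      simp [this]

lemma birkS_le_birkM (n : ℕ) (ω : Ω) : birkS T g n ω ≤ birkM T g n ω := by
  cases n with
  | zero => simp [birkS, birkM]
  | succ n => exact le_max_right _ _

lemma birkM_le (hC : ∀ ω, |g ω| ≤ C) (n : ℕ) (ω : Ω) : birkM T g n ω ≤ n * C := by
  induction n with
  | zero => simp [birkM]
  | succ n ih =>
    refine max_le (ih.trans ?_) ((abs_le.1 (birkS_abs_le hC (n+1) ω)).2)
    have h0 : (0:ℝ) ≤ C := le_trans (abs_nonneg _) (by simpa using birkS_abs_le (T:=T) hC 1 ω)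
    push_cast; nlinarith

lemma birkS_meas (hT : Measurable T) (hg : Measurable g) (n : ℕ) :
    Measurable (birkS T g n) := by
  apply Finset.measurable_sum
  exact fun k _ => hg.comp (hT.iterate k)

lemma birkM_meas (hT : Measurable T) (hg : Measurable g) (n : ℕ) :
    Measurable (birkM T g n) := by
  induction n with
  | zero => simpa [birkM] using measurable_const
  | succ n ih => exact Measurable.max ih (birkS_meas hT hg (n+1))

lemma birkM_key (n : ℕ) (ω : Ω) :
    birkM T g n ω ≤ max 0 (g ω + birkM T g n (T ω)) := by
  induction n generalizing ω with
  | zero => simp [birkM]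
  | succ n ih =>
    refine max_le ?_ ?_
    · exact (ih ω).trans (max_le_max le_rfl (add_le_add le_rfl (birkM_mono (T:=T) (g:=g) n (T ω))))
    · rw [birkS_succ']
      refine le_max_of_le_right ?_
      have := (birkS_le_birkM (T:=T) (g:=g) n (T ω)).trans (birkM_mono (T:=T) (g:=g) n (T ω))
      linarith

lemma integrable_of_bdd {μ : Measure Ω} [IsFiniteMeasure μ] {f : Ω → ℝ} {D : ℝ}
    (hf : Measurable f) (h : ∀ ω, |f ω| ≤ D) : Integrable f μ :=
  ⟨hf.aestronglyMeasurable, HasFiniteIntegral.of_bounded (C := D)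
    (ae_of_all _ fun ω => by simpa [Real.norm_eq_abs] using h ω)⟩

lemma maximal_ergodic {μ : Measure Ω} [IsProbabilityMeasure μ]
    (hT : MeasurePreserving T μ μ) (hg : Measurable g) (hC : ∀ ω, |g ω| ≤ C) (n : ℕ) :
    0 ≤ ∫ ω in {ω | 0 < birkM T g n ω}, g ω ∂μ := by
  set A := {ω | 0 < birkM T g n ω} with hAdef
  have hM : Measurable (birkM T g n) := birkM_meas hT.measurable hg n
  have hA : MeasurableSet A := measurableSet_lt measurable_const hM
  have hMb : ∀ ω, |birkM T g n ω| ≤ (n:ℝ) * C := by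
    intro ω
    have h1 := birkM_nonneg (T:=T) (g:=g) n ω
    have h2 := birkM_le (T:=T) hC n ω
    have h3 : (0:ℝ) ≤ (n:ℝ) * C := le_trans h1 h2
    rw [abs_le]; constructor <;> linarith
  have hMint : Integrable (birkM T g n) μ := integrable_of_bdd hM hMb
  have hMTint : Integrable (fun ω => birkM T g n (T ω)) μ :=
    integrable_of_bdd (hM.comp hT.measurable) (fun ω => hMb (T ω))
  have hgint : Integrable g μ := integrable_of_bdd hg hC
  -- pointwise on A
  have key : ∀ ω ∈ A, birkM T g n ω - birkM T g n (T ω) ≤ g ω := by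
    intro ω hω
    have h1 := birkM_key (T:=T) (g:=g) n ω
    rcases le_or_gt (g ω + birkM T g n (T ω)) 0 with h2 | h2
    · exfalso; have := hω; simp only [hAdef, Set.mem_setOf_eq] at this
      have : birkM T g n ω ≤ 0 := h1.trans (by simp [h2])
      linarith [hω]
    · have : birkM T g n ω ≤ g ω + birkM T g n (T ω) := h1.trans (by simp [le_of_lt h2])
      linarith
  have step1 : ∫ ω in A, (birkM T g n ω - birkM T g n (T ω)) ∂μ ≤ ∫ ω in A, g ω ∂μ := by
    refine setIntegral_mono_on (hMint.sub hMTint).integrableOn hgint.integrableOn hA key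
  have e1 : ∫ ω in A, (birkM T g n ω - birkM T g n (T ω)) ∂μ
      = ∫ ω in A, birkM T g n ω ∂μ - ∫ ω in A, birkM T g n (T ω) ∂μ :=
    integral_sub hMint.integrableOn hMTint.integrableOn
  have e2 : ∫ ω in A, birkM T g n ω ∂μ = ∫ ω, birkM T g n ω ∂μ := by
    rw [← integral_add_compl hA hMint]
    have : ∫ ω in Aᶜ, birkM T g n ω ∂μ = 0 := by
      rw [setIntegral_congr_fun hA.compl (g := fun _ => (0:ℝ))]
      · simp
      · intro ω hω
        simp only [hAdef, Set.mem_compl_iff, Set.mem_setOf_eq, not_lt] at hω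
        exact le_antisymm hω (birkM_nonneg n ω)
    rw [this]; ring
  have e3 : ∫ ω in A, birkM T g n (T ω) ∂μ ≤ ∫ ω, birkM T g n (T ω) ∂μ :=
    setIntegral_le_integral hMTint (ae_of_all _ fun ω => birkM_nonneg n (T ω))
  have e4 : ∫ ω, birkM T g n (T ω) ∂μ = ∫ ω, birkM T g n ω ∂μ := by
    rw [← integral_map hT.measurable.aemeasurable hM.aestronglyMeasurable, hT.map_eq]
  linarith

lemma maximal_ergodic_union {μ : Measure Ω} [IsProbabilityMeasure μ]
    (hT : MeasurePreserving T μ μ) (hg : Measurable g) (hC : ∀ ω, |g ω| ≤ C) :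
    0 ≤ ∫ ω in ⋃ n, {ω | 0 < birkM T g n ω}, g ω ∂μ := by
  have hA : ∀ n : ℕ, MeasurableSet {ω | 0 < birkM T g n ω} := fun n =>
    measurableSet_lt measurable_const (birkM_meas hT.measurable hg n)
  have hmono : Monotone (fun n => {ω | 0 < birkM T g n ω}) := by
    intro m n hmn ω hω
    exact lt_of_lt_of_le hω (birkM_mono' hmn ω)
  have hgint : Integrable g μ := integrable_of_bdd hg hC
  have := tendsto_setIntegral_of_monotone hA hmono hgint.integrableOn
  exact ge_of_tendsto' this (fun n => maximal_ergodic hT hg hC n)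

lemma u_abs_le (hC0 : 0 ≤ C) (hC : ∀ ω, |g ω| ≤ C) (ω : Ω) (n : ℕ) :
    |(1/(n:ℝ)) * birkS T g n ω| ≤ C := by
  rcases Nat.eq_zero_or_pos n with rfl | hn
  · simp [birkS, hC0]
  · have hn' : (0:ℝ) < n := by exact_mod_cast hn
    rw [abs_mul, abs_of_pos (by positivity : (0:ℝ) < 1/(n:ℝ))]
    calc 1/(n:ℝ) * |birkS T g n ω| ≤ 1/(n:ℝ) * ((n:ℝ) * C) := by
          have := birkS_abs_le (T:=T) hC n ω
          gcongr
      _ = C := by field_simp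

lemma birkhoff_limsup_le {μ : Measure Ω} [IsProbabilityMeasure μ]
    (hT : Ergodic T μ) (hg : Measurable g) (hC0 : 0 ≤ C) (hC : ∀ ω, |g ω| ≤ C)
    {ε : ℝ} (hε : 0 < ε) :
    ∀ᵐ ω ∂μ, limsup (fun n : ℕ => (1/(n:ℝ)) * birkS T g n ω) atTop ≤ (∫ ω, g ω ∂μ) + ε := by
  set m := ∫ ω, g ω ∂μ with hm
  set c := m + ε with hc
  set L : Ω → ℝ := fun ω => limsup (fun n : ℕ => (1/(n:ℝ)) * birkS T g n ω) atTop with hL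
  have hLmeas : Measurable L :=
    Measurable.limsup (fun n => measurable_const.mul (birkS_meas hT.measurable hg n))
  set A : Set Ω := L ⁻¹' (Set.Ioi c) with hA
  have hAmeas : MeasurableSet A := hLmeas measurableSet_Ioi
  have hLinv : ∀ ω, L (T ω) = L ω := by
    intro ω
    have hshift : limsup (fun n : ℕ => (1/((n:ℝ)+1)) * birkS T g (n+1) ω) atTop
        = limsup (fun n : ℕ => (1/(n:ℝ)) * birkS T g n ω) atTop := by
      have := limsup_nat_add (fun n : ℕ => (1/(n:ℝ)) * birkS T g n ω) 1
      simpa using this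
    show limsup (fun n : ℕ => (1/(n:ℝ)) * birkS T g n (T ω)) atTop
        = limsup (fun n : ℕ => (1/(n:ℝ)) * birkS T g n ω) atTop
    rw [← hshift]
    refine limsup_eq_of_sub (C := C) (fun n => by
        simpa using u_abs_le hC0 hC ω (n+1)) (u_abs_le hC0 hC (T ω)) ?_
    have hbd : ∀ᶠ (n : ℕ) in atTop, ‖(1/(n:ℝ)) * birkS T g n (T ω)
        - (1/((n:ℝ)+1)) * birkS T g (n+1) ω‖ ≤ (2*C + |g ω|)/n := by
      filter_upwards [eventually_ge_atTop 1] with n hn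
      have hn' : (0:ℝ) < n := by exact_mod_cast hn
      have hrw : birkS T g n (T ω) = birkS T g (n+1) ω - g ω := by
        rw [birkS_succ']; ring
      rw [hrw]
      have hs : |birkS T g (n+1) ω| ≤ ((n:ℝ)+1) * C := by
        simpa using birkS_abs_le (T:=T) hC (n+1) ω
      set s := birkS T g (n+1) ω
      have key : (1/(n:ℝ)) * (s - g ω) - (1/((n:ℝ)+1)) * s
          = s / ((n:ℝ)*((n:ℝ)+1)) - g ω / n := by
        field_simp; ring
      rw [Real.norm_eq_abs, key]
      have h1 : |s / ((n:ℝ)*((n:ℝ)+1))| ≤ C / n := by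
        rw [abs_div, abs_of_pos (show (0:ℝ) < (n:ℝ)*((n:ℝ)+1) by positivity)]
        rw [div_le_div_iff₀ (by positivity) hn']
        nlinarith [abs_nonneg s, hs, hC0]
      have h2 : |g ω / n| ≤ |g ω| / n := by
        rw [abs_div, abs_of_pos hn']
      calc |s / ((n:ℝ)*((n:ℝ)+1)) - g ω / n| ≤ |s / ((n:ℝ)*((n:ℝ)+1))| + |g ω / n| :=
            abs_sub _ _
        _ ≤ C/n + |g ω|/n := add_le_add h1 h2
        _ = (C + |g ω|)/n := by ring
        _ ≤ (2*C + |g ω|)/n := by gcongr; linarith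
    refine squeeze_zero_norm' hbd ?_
    exact tendsto_const_div_atTop_nhds_zero_nat _
  have hinv : T ⁻¹' A = A := by
    ext ω
    simp [hA, Set.mem_preimage, hLinv ω]
  rcases hT.ae_empty_or_univ hAmeas hinv with hempty | huniv
  · have : μ A = 0 := by
      have := hempty
      simpa [ae_eq_empty] using this
    have hae : ∀ᵐ ω ∂μ, ω ∉ A := (measure_eq_zero_iff_ae_notMem (μ := μ)).1 this
    filter_upwards [hae] with ω hω
    rw [hA] at hω
    simp only [Set.mem_preimage, Set.mem_Ioi, not_lt] at hω
    exact hω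
  · exfalso
    set g' : Ω → ℝ := fun ω => g ω - c with hg'def
    have hg' : Measurable g' := hg.sub measurable_const
    have hC' : ∀ ω, |g' ω| ≤ C + |c| := fun ω => (abs_sub _ _).trans
      (add_le_add (hC ω) le_rfl)
    have hU : A ⊆ ⋃ n, {ω | 0 < birkM T g' n ω} := by
      intro ω hω
      have hfreq : ∃ᶠ (n : ℕ) in atTop, c < (1/(n:ℝ)) * birkS T g n ω := by
        refine frequently_lt_of_lt_limsup ?_ hω
        exact (isBoundedUnder_of ⟨-C, fun n =>
          (abs_le.1 (u_abs_le hC0 hC ω n)).1⟩ :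
            IsBoundedUnder (· ≥ ·) atTop _).isCoboundedUnder_le
      obtain ⟨n, hcn, hn1⟩ := (hfreq.and_eventually (eventually_ge_atTop 1)).exists
      have hn' : (0:ℝ) < n := by exact_mod_cast hn1
      have hS : (n:ℝ) * c < birkS T g n ω := by
        have := (mul_lt_mul_iff_right₀ hn').2 hcn
        calc (n:ℝ) * c < (n:ℝ) * ((1/(n:ℝ)) * birkS T g n ω) := this
          _ = birkS T g n ω := by field_simp
      have hSg' : birkS T g' n ω = birkS T g n ω - (n:ℝ) * c := by
        simp only [birkS, hg'def, Finset.sum_sub_distrib, Finset.sum_const,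
          Finset.card_range, nsmul_eq_mul]
      refine Set.mem_iUnion.2 ⟨n, ?_⟩
      have : 0 < birkS T g' n ω := by rw [hSg']; linarith
      exact lt_of_lt_of_le this (birkS_le_birkM n ω)
    have hnull : μ (⋃ n, {ω | 0 < birkM T g' n ω})ᶜ = 0 := by
      have hAc : μ Aᶜ = 0 := ae_eq_univ.1 huniv
      exact measure_mono_null (Set.compl_subset_compl.2 hU) hAc
    have hpos := maximal_ergodic_union hT.toMeasurePreserving hg' hC'
    have heq : ∫ ω in ⋃ n, {ω | 0 < birkM T g' n ω}, g' ω ∂μ = ∫ ω, g' ω ∂μ := by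
      rw [setIntegral_congr_set (ae_eq_univ.2 hnull), setIntegral_univ]
    have hint : ∫ ω, g' ω ∂μ = -ε := by
      rw [hg'def]
      rw [integral_sub (integrable_of_bdd hg hC) (integrable_const c)]
      simp [hm, hc]
    rw [heq, hint] at hpos
    linarith

theorem birkhoff_ergodic {μ : Measure Ω} [IsProbabilityMeasure μ]
    (hT : Ergodic T μ) (hg : Measurable g) (hC0 : 0 ≤ C) (hC : ∀ ω, |g ω| ≤ C) :
    ∀ᵐ ω ∂μ, Tendsto (fun n : ℕ => (1/(n:ℝ)) * birkS T g n ω) atTop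
      (𝓝 (∫ ω, g ω ∂μ)) := by
  set m := ∫ ω, g ω ∂μ with hm
  have hneg : ∀ (n : ℕ) (ω : Ω), birkS T (fun ω => -g ω) n ω = - birkS T g n ω := by
    intro n ω; simp [birkS]
  have h1 : ∀ᵐ ω ∂μ, ∀ k : ℕ, limsup (fun n : ℕ => (1/(n:ℝ)) * birkS T g n ω) atTop
      ≤ m + 1/((k:ℝ)+1) :=
    ae_all_iff.2 fun k => birkhoff_limsup_le hT hg hC0 hC (by positivity)
  have h2 : ∀ᵐ ω ∂μ, ∀ k : ℕ, limsup (fun n : ℕ => -((1/(n:ℝ)) * birkS T g n ω)) atTop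
      ≤ -m + 1/((k:ℝ)+1) := by
    have hh := ae_all_iff.2 fun k : ℕ =>
      birkhoff_limsup_le hT hg.neg hC0 (fun ω => by simpa using hC ω)
        (ε := 1/((k:ℝ)+1)) (by positivity)
    filter_upwards [hh] with ω hω k
    have h := hω k
    have heq : (fun n : ℕ => (1/(n:ℝ)) * birkS T (-g) n ω)
        = fun n : ℕ => -((1/(n:ℝ)) * birkS T g n ω) := by
      funext n; show 1/(n:ℝ) * birkS T (fun x => -g x) n ω = _; rw [hneg]; ring
    rw [heq] at h
    simp only [Pi.neg_apply, integral_neg] at h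
    exact h
  filter_upwards [h1, h2] with ω hω1 hω2
  have hbdd_above : IsBoundedUnder (· ≤ ·) atTop (fun n : ℕ => (1/(n:ℝ)) * birkS T g n ω) :=
    isBoundedUnder_of ⟨C, fun n => (abs_le.1 (u_abs_le hC0 hC ω n)).2⟩
  have hbdd_below : IsBoundedUnder (· ≥ ·) atTop (fun n : ℕ => (1/(n:ℝ)) * birkS T g n ω) :=
    isBoundedUnder_of ⟨-C, fun n => (abs_le.1 (u_abs_le hC0 hC ω n)).1⟩
  have hlimsup : limsup (fun n : ℕ => (1/(n:ℝ)) * birkS T g n ω) atTop ≤ m := by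
    refine le_of_forall_pos_le_add fun ε hε => ?_
    obtain ⟨k, hk⟩ := exists_nat_one_div_lt hε
    have := hω1 k
    linarith
  have hliminf : m ≤ liminf (fun n : ℕ => (1/(n:ℝ)) * birkS T g n ω) atTop := by
    refine le_of_forall_pos_le_add fun ε hε => ?_
    obtain ⟨k, hk⟩ := exists_nat_one_div_lt (half_pos hε)
    have hls : limsup (fun n : ℕ => -((1/(n:ℝ)) * birkS T g n ω)) atTop < -m + ε := by
      refine lt_of_le_of_lt (hω2 k) ?_
      linarith
    have hev : ∀ᶠ (n : ℕ) in atTop, -((1/(n:ℝ)) * birkS T g n ω) < -m + ε :=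
      eventually_lt_of_limsup_lt hls
        (isBoundedUnder_of ⟨C, fun (n : ℕ) => by
          linarith [(abs_le.1 (u_abs_le (T:=T) (g:=g) hC0 hC ω n)).1]⟩)
    have hev' : ∀ᶠ (n : ℕ) in atTop, m - ε ≤ (1/(n:ℝ)) * birkS T g n ω :=
      hev.mono fun n hn => by linarith
    have := le_liminf_of_le (hbdd_above.isCoboundedUnder_ge) hev'
    linarith
  exact tendsto_of_le_liminf_of_limsup_le hliminf hlimsup hbdd_above hbdd_below

end Birkhoff

section Part1
open BoundedContinuousFunction

lemma abs_ciSup_sub_ciSup_le {ι : Type*} [Nonempty ι] {f g : ι → ℝ} {ε : ℝ}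
    (hf : BddAbove (Set.range f)) (hg : BddAbove (Set.range g))
    (h : ∀ i, |f i - g i| ≤ ε) : |(⨆ i, f i) - ⨆ i, g i| ≤ ε := by
  have h1 : (⨆ i, g i) ≤ (⨆ i, f i) + ε := ciSup_le fun i => by
    have h2 := abs_le.1 (h i); have h3 := le_ciSup hf i; linarith [h2.1]
  have h4 : (⨆ i, f i) ≤ (⨆ i, g i) + ε := ciSup_le fun i => by
    have h2 := abs_le.1 (h i); have h3 := le_ciSup hg i; linarith [h2.2]
  rw [abs_le]; constructor <;> linarith

variable {X Y Λ : Type*}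
    [MetricSpace X] [CompactSpace X] [MeasurableSpace X] [BorelSpace X]
    [MetricSpace Y] [CompactSpace Y] [Nonempty Y]
    [MetricSpace Λ] [CompactSpace Λ] [Nonempty Λ]

lemma joint_cont (l : Y → Λ → X → ℝ)
    (hl : Continuous fun p : Y × Λ × X => l p.1 p.2.1 p.2.2)
    (Qs : ℕ → ProbabilityMeasure X) (Qinf : ProbabilityMeasure X)
    (ys : ℕ → Y) (yinf : Y)
    (hQ : Tendsto Qs atTop (𝓝 Qinf)) (hy : Tendsto ys atTop (𝓝 yinf)) :
    Tendsto (fun i => ⨆ lam : Λ, ∫ x, l (ys i) lam x ∂(Qs i : Measure X))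
      atTop (𝓝 (⨆ lam : Λ, ∫ x, l yinf lam x ∂(Qinf : Measure X))) := by
  have hcont : ∀ (y : Y) (lam : Λ), Continuous (l y lam) := fun y lam =>
    hl.comp (continuous_const.prodMk (continuous_const.prodMk continuous_id))
  set bl : BoundedContinuousFunction (Y × Λ × X) ℝ := .mkOfCompact ⟨_, hl⟩ with hbl
  set C : ℝ := ‖bl‖ with hCdef
  have hCb : ∀ y lam x, |l y lam x| ≤ C := fun y lam x => by
    have := bl.norm_coe_le_norm (y, lam, x); rw [Real.norm_eq_abs] at this; exact this
  have hC0 : 0 ≤ C := norm_nonneg _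
  have hInt : ∀ (y : Y) (lam : Λ) (Q : ProbabilityMeasure X),
      Integrable (l y lam) (Q : Measure X) := fun y lam Q =>
    integrable_of_bdd (hcont y lam).measurable (hCb y lam)
  have hIb : ∀ (y : Y) (lam : Λ) (Q : ProbabilityMeasure X),
      |∫ x, l y lam x ∂(Q : Measure X)| ≤ C := by
    intro y lam Q
    rw [← Real.norm_eq_abs]
    calc ‖∫ x, l y lam x ∂(Q : Measure X)‖ ≤ C * ((Q : Measure X) Set.univ).toReal :=
          norm_integral_le_of_norm_le_const
            (ae_of_all _ fun x => by simpa [Real.norm_eq_abs] using hCb y lam x)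
      _ = C := by simp
  have hbdd : ∀ (y : Y) (Q : ProbabilityMeasure X),
      BddAbove (Set.range fun lam : Λ => ∫ x, l y lam x ∂(Q : Measure X)) := fun y Q =>
    ⟨C, Set.forall_mem_range.2 fun lam => (abs_le.1 (hIb y lam Q)).2⟩
  have hintdiff : ∀ (Q : ProbabilityMeasure X) (y y' : Y) (lam lam' : Λ) {c : ℝ},
      (∀ x, |l y lam x - l y' lam' x| ≤ c) →
      |(∫ x, l y lam x ∂(Q : Measure X)) - ∫ x, l y' lam' x ∂(Q : Measure X)| ≤ c := by
    intro Q y y' lam lam' c hc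
    rw [← integral_sub (hInt y lam Q) (hInt y' lam' Q), ← Real.norm_eq_abs]
    calc ‖∫ x, (l y lam x - l y' lam' x) ∂(Q : Measure X)‖
        ≤ c * ((Q : Measure X) Set.univ).toReal :=
          norm_integral_le_of_norm_le_const
            (ae_of_all _ fun x => by simpa [Real.norm_eq_abs] using hc x)
      _ = c := by simp
  have hu : UniformContinuous (fun p : Y × Λ × X => l p.1 p.2.1 p.2.2) :=
    CompactSpace.uniformContinuous_of_continuous hl
  have hdist1 : ∀ (y y' : Y) (lam : Λ) (x : X),
      dist ((y, lam, x) : Y × Λ × X) (y', lam, x) = dist y y' := by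
    intro y y' lam x
    rw [Prod.dist_eq, Prod.dist_eq, dist_self, dist_self, max_self,
      max_eq_left dist_nonneg]
  have hdist2 : ∀ (y : Y) (lam lam' : Λ) (x : X),
      dist ((y, lam, x) : Y × Λ × X) (y, lam', x) = dist lam lam' := by
    intro y lam lam' x
    rw [Prod.dist_eq, Prod.dist_eq, dist_self, dist_self,
      max_eq_left dist_nonneg, max_eq_right dist_nonneg]
  rw [Metric.tendsto_atTop]
  intro ε hε
  rw [← eventually_atTop]
  obtain ⟨δ₁, hδ₁pos, hδ₁⟩ := Metric.uniformContinuous_iff.1 hu (ε/4) (by linarith)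
  obtain ⟨δ₂, hδ₂pos, hδ₂⟩ := Metric.uniformContinuous_iff.1 hu (ε/8) (by linarith)
  -- finite subcover of Λ
  obtain ⟨t, ht⟩ := IsCompact.elim_finite_subcover (isCompact_univ (X := Λ))
    (fun lam => Metric.ball lam δ₂) (fun lam => Metric.isOpen_ball)
    (fun lam _ => Set.mem_iUnion.2 ⟨lam, Metric.mem_ball_self hδ₂pos⟩)
  -- weak convergence for the finitely many centers
  have hw : ∀ j : Λ, Tendsto (fun i => ∫ x, l yinf j x ∂(Qs i : Measure X)) atTop
      (𝓝 (∫ x, l yinf j x ∂(Qinf : Measure X))) := by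
    intro j
    have := (ProbabilityMeasure.tendsto_iff_forall_integral_tendsto.mp hQ)
      (BoundedContinuousFunction.mkOfCompact ⟨fun x => l yinf j x, hcont yinf j⟩)
    simpa using this
  have hev2 : ∀ᶠ i in atTop, ∀ j ∈ t,
      |(∫ x, l yinf j x ∂(Qs i : Measure X)) - ∫ x, l yinf j x ∂(Qinf : Measure X)| < ε/8 := by
    rw [Filter.eventually_all_finset]
    intro j _
    obtain ⟨N, hN⟩ := Metric.tendsto_atTop.1 (hw j) (ε/8) (by linarith)
    rw [eventually_atTop]
    exact ⟨N, fun i hi => by have := hN i hi; rwa [Real.dist_eq] at this⟩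
  have hyev : ∀ᶠ i in atTop, dist (ys i) yinf < δ₁ :=
    hy.eventually (Metric.ball_mem_nhds yinf hδ₁pos)
  filter_upwards [hyev, hev2] with i hi1 hi2
  rw [Real.dist_eq]
  have hkey : ∀ lam : Λ, |(∫ x, l (ys i) lam x ∂(Qs i : Measure X))
      - ∫ x, l yinf lam x ∂(Qinf : Measure X)| ≤ ε/4 + ε/8 + ε/8 + ε/8 := by
    intro lam
    obtain ⟨j, hjt, hj⟩ : ∃ j ∈ t, lam ∈ Metric.ball j δ₂ := by
      have := ht (Set.mem_univ lam)
      simpa using this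
    have e1 : |(∫ x, l (ys i) lam x ∂(Qs i : Measure X))
        - ∫ x, l yinf lam x ∂(Qs i : Measure X)| ≤ ε/4 :=
      hintdiff _ _ _ _ _ fun x => le_of_lt (by
        have := hδ₁ (show dist ((ys i, lam, x) : Y × Λ × X) (yinf, lam, x) < δ₁ by
          rw [hdist1]; exact hi1)
        rwa [Real.dist_eq] at this)
    have e2 : |(∫ x, l yinf lam x ∂(Qs i : Measure X))
        - ∫ x, l yinf j x ∂(Qs i : Measure X)| ≤ ε/8 :=
      hintdiff _ _ _ _ _ fun x => le_of_lt (by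
        have := hδ₂ (show dist ((yinf, lam, x) : Y × Λ × X) (yinf, j, x) < δ₂ by
          rw [hdist2]; exact hj)
        rwa [Real.dist_eq] at this)
    have e3 := hi2 j hjt
    have e4 : |(∫ x, l yinf j x ∂(Qinf : Measure X))
        - ∫ x, l yinf lam x ∂(Qinf : Measure X)| ≤ ε/8 :=
      hintdiff _ _ _ _ _ fun x => le_of_lt (by
        have := hδ₂ (show dist ((yinf, j, x) : Y × Λ × X) (yinf, lam, x) < δ₂ by
          rw [hdist2]; rw [dist_comm]; exact hj)
        rwa [Real.dist_eq] at this)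
    have t1 := abs_sub_le (∫ x, l (ys i) lam x ∂(Qs i : Measure X))
      (∫ x, l yinf lam x ∂(Qs i : Measure X)) (∫ x, l yinf lam x ∂(Qinf : Measure X))
    have t2 := abs_sub_le (∫ x, l yinf lam x ∂(Qs i : Measure X))
      (∫ x, l yinf j x ∂(Qs i : Measure X)) (∫ x, l yinf lam x ∂(Qinf : Measure X))
    have t3 := abs_sub_le (∫ x, l yinf j x ∂(Qs i : Measure X))
      (∫ x, l yinf j x ∂(Qinf : Measure X)) (∫ x, l yinf lam x ∂(Qinf : Measure X))
    linarith [le_of_lt e3]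
  have := abs_ciSup_sub_ciSup_le (hbdd (ys i) (Qs i)) (hbdd yinf Qinf) hkey
  linarith
end Part1

section Breiman
variable {Ω : Type*} [MeasurableSpace Ω] {T : Ω → Ω} {C : ℝ}

lemma sum_Icc_eq (f : ℕ → ℝ) (N : ℕ) :
    ∑ i ∈ Finset.Icc 1 N, f i = (∑ i ∈ Finset.range N, f i) + f N - f 0 := by
  have h1 : ∑ i ∈ Finset.Icc 1 N, f i = ∑ i ∈ Finset.range N, f (1 + i) := by
    rw [← Finset.Ico_add_one_right_eq_Icc, Finset.sum_Ico_eq_sum_range]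
    simp
  have h2 : ∑ i ∈ Finset.range N, f (i + 1) = (∑ i ∈ Finset.range N, f i) + f N - f 0 := by
    have := Finset.sum_range_succ' f N
    have h3 := Finset.sum_range_succ f N
    linarith [this, h3]
  rw [h1]
  simpa [add_comm] using h2

lemma cesaro_icc {G : Ω → ℝ} (hC : ∀ ω, |G ω| ≤ C) {ω : Ω} {a : ℝ}
    (h : Tendsto (fun n : ℕ => (1/(n:ℝ)) * birkS T G n ω) atTop (𝓝 a)) :
    Tendsto (fun N : ℕ => (1/(N:ℝ)) * ∑ i ∈ Finset.Icc 1 N, G (T^[i] ω)) atTop (𝓝 a) := by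
  have heq : (fun N : ℕ => (1/(N:ℝ)) * ∑ i ∈ Finset.Icc 1 N, G (T^[i] ω))
      = fun N : ℕ => (1/(N:ℝ)) * birkS T G N ω + (1/(N:ℝ)) * (G (T^[N] ω) - G ω) := by
    funext N
    rw [sum_Icc_eq (fun i => G (T^[i] ω)) N]
    show (1/(N:ℝ)) * (birkS T G N ω + G (T^[N] ω) - G ω) = _
    ring
  rw [heq]
  have h0 : Tendsto (fun N : ℕ => (1/(N:ℝ)) * (G (T^[N] ω) - G ω)) atTop (𝓝 0) := by
    refine squeeze_zero_norm (a := fun N : ℕ => (2*C)/N) (fun N => ?_)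
      (tendsto_const_div_atTop_nhds_zero_nat _)
    rcases Nat.eq_zero_or_pos N with rfl | hN
    · simp
    · have hN' : (0:ℝ) < N := by exact_mod_cast hN
      rw [Real.norm_eq_abs, abs_mul, abs_of_pos (by positivity : (0:ℝ) < 1/(N:ℝ))]
      have habs : |G (T^[N] ω) - G ω| ≤ 2*C := by
        have := hC (T^[N] ω); have := hC ω
        have h4 := abs_sub (G (T^[N] ω)) (G ω)
        linarith
      calc (1/(N:ℝ)) * |G (T^[N] ω) - G ω| ≤ (1/(N:ℝ)) * (2*C) := by
            have h5 : (0:ℝ) ≤ 1/(N:ℝ) := by positivity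
            nlinarith
        _ = 2*C/N := by ring
  simpa using h.add h0

theorem breiman {μ : Measure Ω} [IsProbabilityMeasure μ] (hT : Ergodic T μ)
    (F : ℕ → Ω → ℝ) (Finf : Ω → ℝ)
    (hFm : ∀ i, Measurable (F i)) (hFinfm : Measurable Finf)
    (hC0 : 0 ≤ C) (hFb : ∀ i ω, |F i ω| ≤ C) (hFinfb : ∀ ω, |Finf ω| ≤ C)
    (hconv : ∀ᵐ ω ∂μ, Tendsto (fun i => F i ω) atTop (𝓝 (Finf ω))) :
    ∀ᵐ ω ∂μ, Tendsto (fun N : ℕ => (1/(N:ℝ)) * ∑ i ∈ Finset.Icc 1 N, F i (T^[i] ω))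
      atTop (𝓝 (∫ ω', Finf ω' ∂μ)) := by
  set D : ℕ → Ω → ℝ := fun i ω => |F i ω - Finf ω| with hD
  have hD0 : ∀ i ω, 0 ≤ D i ω := fun i ω => abs_nonneg _
  have hDb : ∀ i ω, D i ω ≤ 2*C := by
    intro i ω
    have h4 := abs_sub (F i ω) (Finf ω)
    have := hFb i ω; have := hFinfb ω
    linarith
  have hDm : ∀ i, Measurable (D i) := fun i => ((hFm i).sub hFinfm).abs
  set h : ℕ → Ω → ℝ := fun k ω => ⨆ i : ℕ, D (k + i) ω with hh
  have hbdd : ∀ k ω, BddAbove (Set.range fun i : ℕ => D (k + i) ω) := fun k ω =>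
    ⟨2*C, Set.forall_mem_range.2 fun i => hDb _ _⟩
  have hhle : ∀ k ω, h k ω ≤ 2*C := fun k ω => ciSup_le fun i => hDb _ _
  have hh0 : ∀ k ω, 0 ≤ h k ω := fun k ω =>
    le_trans (hD0 (k+0) ω) (le_ciSup (hbdd k ω) 0)
  have hhabs : ∀ k ω, |h k ω| ≤ 2*C := fun k ω => abs_le.2 ⟨by linarith [hh0 k ω], hhle k ω⟩
  have hhm : ∀ k, Measurable (h k) := fun k => Measurable.iSup fun i => hDm (k + i)
  have hDh : ∀ k i ω, k ≤ i → D i ω ≤ h k ω := by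
    intro k i ω hki
    have := le_ciSup (hbdd k ω) (i - k)
    rwa [Nat.add_sub_cancel' hki] at this
  have hhtend : ∀ ω, Tendsto (fun i => F i ω) atTop (𝓝 (Finf ω)) →
      Tendsto (fun k => h k ω) atTop (𝓝 0) := by
    intro ω hc
    have hDtend : Tendsto (fun i => D i ω) atTop (𝓝 0) := by
      simpa using (hc.sub (tendsto_const_nhds (x := Finf ω))).abs
    refine tendsto_order.2 ⟨fun a ha => Eventually.of_forall fun k =>
      lt_of_lt_of_le ha (hh0 k ω), fun a ha => ?_⟩
    obtain ⟨K, hK⟩ := eventually_atTop.1 (hDtend.eventually_lt_const (show (0:ℝ) < a/2 by linarith))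
    rw [eventually_atTop]
    refine ⟨K, fun k hk => lt_of_le_of_lt (ciSup_le fun i => le_of_lt (hK (k + i)
      (le_trans hk (Nat.le_add_right k i)))) (by linarith)⟩
  have hint_h : Tendsto (fun k => ∫ ω, h k ω ∂μ) atTop (𝓝 0) := by
    have := tendsto_integral_of_dominated_convergence (μ := μ) (F := h)
      (f := fun _ => (0:ℝ)) (bound := fun _ => 2*C)
      (fun k => (hhm k).aestronglyMeasurable) (integrable_const _)
      (fun k => ae_of_all _ fun ω => by
        rw [Real.norm_eq_abs]; exact hhabs k ω)
      (by filter_upwards [hconv] with ω hc; exact hhtend ω hc)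
    simpa using this
  have hB1 := birkhoff_ergodic hT hFinfm hC0 hFinfb
  have hBh : ∀ᵐ ω ∂μ, ∀ k : ℕ, Tendsto (fun n : ℕ => (1/(n:ℝ)) * birkS T (h k) n ω)
      atTop (𝓝 (∫ ω', h k ω' ∂μ)) :=
    ae_all_iff.2 fun k => birkhoff_ergodic hT (hhm k) (by linarith) (hhabs k)
  filter_upwards [hB1, hBh] with ω hω1 hωh
  set β : ℕ → ℝ := fun N => (1/(N:ℝ)) * ∑ i ∈ Finset.Icc 1 N, D i (T^[i] ω) with hβ
  have hβ0 : ∀ N, 0 ≤ β N := fun N => by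
    apply mul_nonneg (by positivity)
    exact Finset.sum_nonneg fun i _ => hD0 _ _
  have hβb : ∀ N, β N ≤ 2*C := by
    intro N
    rcases Nat.eq_zero_or_pos N with rfl | hN
    · simp [hβ]; linarith
    · have hN' : (0:ℝ) < N := by exact_mod_cast hN
      have hsum : ∑ i ∈ Finset.Icc 1 N, D i (T^[i] ω) ≤ (N:ℝ) * (2*C) := by
        calc ∑ i ∈ Finset.Icc 1 N, D i (T^[i] ω) ≤ ∑ _i ∈ Finset.Icc 1 N, 2*C :=
              Finset.sum_le_sum fun i _ => hDb _ _
          _ = (N:ℝ) * (2*C) := by simp [Nat.card_Icc]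
      calc β N ≤ (1/(N:ℝ)) * ((N:ℝ) * (2*C)) := by
            have : (0:ℝ) ≤ 1/(N:ℝ) := by positivity
            exact mul_le_mul_of_nonneg_left hsum this
        _ = 2*C := by field_simp
  have hβlim : Tendsto β atTop (𝓝 0) := by
    have hlimsup : limsup β atTop ≤ 0 := by
      have hk : ∀ k : ℕ, limsup β atTop ≤ ∫ ω', h k ω' ∂μ := by
        intro k
        set γ : ℕ → ℝ := fun N => (1/(N:ℝ)) * ∑ i ∈ Finset.Icc 1 N, h k (T^[i] ω) with hγ
        have hγlim : Tendsto γ atTop (𝓝 (∫ ω', h k ω' ∂μ)) :=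
          cesaro_icc (hhabs k) (hωh k)
        have hck : Tendsto (fun N : ℕ => (2*C*(k:ℝ))/N + γ N) atTop
            (𝓝 (0 + ∫ ω', h k ω' ∂μ)) :=
          (tendsto_const_div_atTop_nhds_zero_nat _).add hγlim
        have hle : ∀ N, β N ≤ (2*C*(k:ℝ))/N + γ N := by
          intro N
          have hsum : ∑ i ∈ Finset.Icc 1 N, D i (T^[i] ω)
              ≤ 2*C*(k:ℝ) + ∑ i ∈ Finset.Icc 1 N, h k (T^[i] ω) := by
            have step : ∀ i ∈ Finset.Icc 1 N, D i (T^[i] ω)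
                ≤ (if i < k then 2*C else 0) + h k (T^[i] ω) := by
              intro i _
              by_cases hik : i < k
              · simp only [if_pos hik]
                linarith [hDb i (T^[i] ω), hh0 k (T^[i] ω)]
              · simp only [if_neg hik]
                linarith [hDh k i (T^[i] ω) (not_lt.1 hik)]
            calc ∑ i ∈ Finset.Icc 1 N, D i (T^[i] ω)
                ≤ ∑ i ∈ Finset.Icc 1 N, ((if i < k then 2*C else 0) + h k (T^[i] ω)) :=
                  Finset.sum_le_sum step
              _ = (∑ i ∈ Finset.Icc 1 N, (if i < k then 2*C else 0))
                  + ∑ i ∈ Finset.Icc 1 N, h k (T^[i] ω) := Finset.sum_add_distrib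
              _ ≤ 2*C*(k:ℝ) + ∑ i ∈ Finset.Icc 1 N, h k (T^[i] ω) := by
                  have hsub : (Finset.Icc 1 N).filter (· < k) ⊆ Finset.Ico 1 k := by
                    intro i hi
                    simp only [Finset.mem_filter, Finset.mem_Icc] at hi
                    exact Finset.mem_Ico.2 ⟨hi.1.1, hi.2⟩
                  have hcard : (((Finset.Icc 1 N).filter (· < k)).card : ℝ) ≤ (k:ℝ) := by
                    have := (Finset.card_le_card hsub).trans (by
                      rw [Nat.card_Ico]; omega : (Finset.Ico 1 k).card ≤ k)
                    exact_mod_cast this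
                  have hite : ∑ i ∈ Finset.Icc 1 N, (if i < k then 2*C else 0) ≤ 2*C*(k:ℝ) := by
                    calc ∑ i ∈ Finset.Icc 1 N, (if i < k then 2*C else 0)
                        = ∑ _i ∈ (Finset.Icc 1 N).filter (· < k), 2*C :=
                          (Finset.sum_filter _ _).symm
                      _ = (((Finset.Icc 1 N).filter (· < k)).card : ℝ) * (2*C) := by
                          rw [Finset.sum_const, nsmul_eq_mul]
                      _ ≤ (k:ℝ) * (2*C) := by nlinarith
                      _ = 2*C*(k:ℝ) := by ring
                  linarith
          have h1N : (0:ℝ) ≤ 1/(N:ℝ) := by positivity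
          calc β N ≤ (1/(N:ℝ)) * (2*C*(k:ℝ) + ∑ i ∈ Finset.Icc 1 N, h k (T^[i] ω)) :=
                mul_le_mul_of_nonneg_left hsum h1N
            _ = (1/(N:ℝ)) * (2*C*(k:ℝ)) + γ N := by rw [mul_add]
            _ = (2*C*(k:ℝ))/N + γ N := by rw [one_div, inv_mul_eq_div]
        have hcob : IsCoboundedUnder (· ≤ ·) atTop β :=
          (isBoundedUnder_of ⟨0, fun N => hβ0 N⟩ :
            IsBoundedUnder (· ≥ ·) atTop β).isCoboundedUnder_le
        calc limsup β atTop ≤ limsup (fun N : ℕ => (2*C*(k:ℝ))/N + γ N) atTop :=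
              limsup_le_limsup (Eventually.of_forall hle) hcob hck.isBoundedUnder_le
          _ = 0 + ∫ ω', h k ω' ∂μ := hck.limsup_eq
          _ = ∫ ω', h k ω' ∂μ := zero_add _
      exact ge_of_tendsto hint_h (Eventually.of_forall hk)
    have hliminf : (0:ℝ) ≤ liminf β atTop :=
      le_liminf_of_le ((isBoundedUnder_of ⟨2*C, hβb⟩ :
          IsBoundedUnder (· ≤ ·) atTop β).isCoboundedUnder_ge)
        (Eventually.of_forall hβ0)
    exact tendsto_of_le_liminf_of_limsup_le hliminf hlimsup
      (isBoundedUnder_of ⟨2*C, hβb⟩) (isBoundedUnder_of ⟨0, hβ0⟩)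
  have hmain := cesaro_icc hFinfb hω1
  have hr : Tendsto (fun N : ℕ => (1/(N:ℝ)) * ∑ i ∈ Finset.Icc 1 N,
      (F i (T^[i] ω) - Finf (T^[i] ω))) atTop (𝓝 0) := by
    apply squeeze_zero_norm (a := β)
    · intro N
      rw [Real.norm_eq_abs, abs_mul, abs_of_nonneg (by positivity : (0:ℝ) ≤ 1/(N:ℝ))]
      refine mul_le_mul_of_nonneg_left ?_ (by positivity)
      exact (Finset.abs_sum_le_sum_abs _ _)
    · exact hβlim
  have heq : (fun N : ℕ => (1/(N:ℝ)) * ∑ i ∈ Finset.Icc 1 N, F i (T^[i] ω))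
      = fun N : ℕ => (1/(N:ℝ)) * ∑ i ∈ Finset.Icc 1 N, Finf (T^[i] ω)
        + (1/(N:ℝ)) * ∑ i ∈ Finset.Icc 1 N, (F i (T^[i] ω) - Finf (T^[i] ω)) := by
    funext N
    rw [← mul_add, ← Finset.sum_add_distrib]
    congr 1
    exact Finset.sum_congr rfl fun i _ => by ring
  rw [heq]
  simpa using hmain.add hr

end Breiman

section Final
variable {X Y Λ : Type*}
    [MetricSpace X] [CompactSpace X] [MeasurableSpace X] [BorelSpace X]
    [MetricSpace Y] [CompactSpace Y] [Nonempty Y]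
    [MetricSpace Λ] [CompactSpace Λ] [Nonempty Λ]

lemma exists_bound (l : Y → Λ → X → ℝ)
    (hl : Continuous fun p : Y × Λ × X => l p.1 p.2.1 p.2.2) :
    ∃ C : ℝ, 0 ≤ C ∧ ∀ (y : Y) (Q : ProbabilityMeasure X),
      |⨆ lam : Λ, ∫ x, l y lam x ∂(Q : Measure X)| ≤ C := by
  set bl : BoundedContinuousFunction (Y × Λ × X) ℝ :=
    BoundedContinuousFunction.mkOfCompact ⟨_, hl⟩ with hbl
  refine ⟨‖bl‖, norm_nonneg _, ?_⟩
  intro y Q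
  have hCb : ∀ (y : Y) (lam : Λ) (x : X), |l y lam x| ≤ ‖bl‖ := fun y lam x => by
    simpa [hbl, Real.norm_eq_abs] using bl.norm_coe_le_norm (y, lam, x)
  have hIb : ∀ lam : Λ, |∫ x, l y lam x ∂(Q : Measure X)| ≤ ‖bl‖ := by
    intro lam
    rw [← Real.norm_eq_abs]
    calc ‖∫ x, l y lam x ∂(Q : Measure X)‖ ≤ ‖bl‖ * ((Q : Measure X) Set.univ).toReal :=
          norm_integral_le_of_norm_le_const
            (ae_of_all _ fun x => by simpa [Real.norm_eq_abs] using hCb y lam x)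
      _ = ‖bl‖ := by simp
  have hbdd : BddAbove (Set.range fun lam : Λ => ∫ x, l y lam x ∂(Q : Measure X)) :=
    ⟨‖bl‖, Set.forall_mem_range.2 fun lam => (abs_le.1 (hIb lam)).2⟩
  rw [abs_le]
  constructor
  · obtain lam0 := Classical.arbitrary Λ
    exact le_trans (abs_le.1 (hIb lam0)).1 (le_ciSup hbdd lam0)
  · exact ciSup_le fun lam => (abs_le.1 (hIb lam)).2
end Final

/-- Joint continuity of `f(Q, y) = max_λ E_Q[l(y,λ,x)]` in `(Q, y)` (weak topology on
measures), and the resulting almost-sure convergence of the Cesàro averages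
`(1/N) Σ f(P_i, y^i)` (evaluated along the shifted process, as in Breiman's generalized
ergodic theorem) to `E[f(P∞, y*)]`. -/
theorem stmt18 {Ω X Y Λ : Type*}
    [MeasurableSpace Ω]
    [MetricSpace X] [CompactSpace X] [MeasurableSpace X] [BorelSpace X]
    [MetricSpace Y] [CompactSpace Y] [Nonempty Y] [MeasurableSpace Y] [BorelSpace Y]
    [MetricSpace Λ] [CompactSpace Λ] [Nonempty Λ]
    (l : Y → Λ → X → ℝ)
    (hl : Continuous fun p : Y × Λ × X => l p.1 p.2.1 p.2.2)
    (μ : Measure Ω) [IsProbabilityMeasure μ]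
    (T : Ω → Ω) (hT : Ergodic T μ)
    -- `P_i`: conditional distributions converging weakly to `P∞` (Lévy's zero-one law)
    (P : ℕ → Ω → ProbabilityMeasure X) (Pinf : Ω → ProbabilityMeasure X)
    (hP : ∀ᵐ ω ∂μ, Tendsto (fun i => P i ω) atTop (𝓝 (Pinf ω)))
    -- expert outputs converging to `y*`
    (yseq : ℕ → Ω → Y) (ystar : Ω → Y)
    (hym : ∀ i, Measurable (yseq i)) (hystarm : Measurable ystar)
    (hPm : ∀ i, Measurable fun ω =>
      ⨆ lam : Λ, ∫ x, l (yseq i ω) lam x ∂(P i ω : Measure X))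
    (hPinfm : Measurable fun ω =>
      ⨆ lam : Λ, ∫ x, l (ystar ω) lam x ∂(Pinf ω : Measure X))
    (hy : ∀ᵐ ω ∂μ, Tendsto (fun i => yseq i ω) atTop (𝓝 (ystar ω))) :
    -- joint continuity of `f(Q, y) = max_λ E_Q[l(y, λ, x)]`
    (∀ (Qs : ℕ → ProbabilityMeasure X) (Qinf : ProbabilityMeasure X)
        (ys : ℕ → Y) (yinf : Y),
      Tendsto Qs atTop (𝓝 Qinf) → Tendsto ys atTop (𝓝 yinf) →
      Tendsto (fun i => ⨆ lam : Λ, ∫ x, l (ys i) lam x ∂(Qs i : Measure X))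
        atTop (𝓝 (⨆ lam : Λ, ∫ x, l yinf lam x ∂(Qinf : Measure X)))) ∧
    -- Cesàro convergence of `f(P_i, y^i)` along the shifted process
    (∀ᵐ ω ∂μ, Tendsto (fun N : ℕ => (1 / (N : ℝ)) * ∑ i ∈ Finset.Icc 1 N,
        ⨆ lam : Λ, ∫ x, l (yseq i (T^[i] ω)) lam x ∂(P i (T^[i] ω) : Measure X))
      atTop
      (𝓝 (∫ ω', (⨆ lam : Λ, ∫ x, l (ystar ω') lam x ∂(Pinf ω' : Measure X)) ∂μ))) := by
  constructor
  · exact fun Qs Qinf ys yinf hQ hy' => joint_cont l hl Qs Qinf ys yinf hQ hy'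
  · obtain ⟨C, hC0, hCb⟩ := exists_bound l hl
    have hconv : ∀ᵐ ω ∂μ, Tendsto
        (fun i => ⨆ lam : Λ, ∫ x, l (yseq i ω) lam x ∂(P i ω : Measure X)) atTop
        (𝓝 (⨆ lam : Λ, ∫ x, l (ystar ω) lam x ∂(Pinf ω : Measure X))) := by
      filter_upwards [hP, hy] with ω h1 h2
      exact joint_cont l hl (fun i => P i ω) (Pinf ω) (fun i => yseq i ω) (ystar ω) h1 h2
    exact breiman hT
      (fun i ω => ⨆ lam : Λ, ∫ x, l (yseq i ω) lam x ∂(P i ω : Measure X))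
      (fun ω => ⨆ lam : Λ, ∫ x, l (ystar ω) lam x ∂(Pinf ω : Measure X))
      hPm hPinfm hC0 (fun i ω => hCb (yseq i ω) (P i ω)) (fun ω => hCb (ystar ω) (Pinf ω))
      hconv
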